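/- Let 𝔽 = 𝔽_2 and consider the subspaces of 𝔽_2^4: V₀ = ⟨(1,0,0,0),(0,1,0,0)⟩, V₁ = ⟨(0,0,1,0),(0,0,0,1)⟩, V₂ = ⟨(1,0,0,1),(0,1,1,1)⟩, V₃ = ⟨(1,0,1,1),(0,1,1,0)⟩, and set 𝒮 = {V₀,V₁,V₂,V₃}. Let ρ be defined on subspaces of 𝔽_2^4 by ρ(V) = 1 if V ∈ 𝒮 and ρ(V) = min{2, dim V} otherwise, so that (𝔽_2^4, ρ) is a q-matroid. Then for every m ∈ ℕ there is no rank-metric code C ≤ 𝔽_2^{4×m} whose column q-polymatroid is equivalent to (𝔽_2^4, ρ); that is, there is no 𝔽_2-linear subspace C of 𝔽_2^{4×m} and 𝔽_2-linear automorphism α of 𝔽_2^4 with ρ_c(α(V)) = ρ(V) for all subspaces V of 𝔽_2^4. -/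

import Mathlib

open Module

/-- The submodule of `n × m` matrices whose column space is contained in `V`. -/
def colspLE {F : Type} [Field F] {n m : ℕ} (V : Submodule F (Fin n → F)) :
    Submodule F (Matrix (Fin n) (Fin m) F) where
  carrier := {M | ∀ x : Fin m → F, M.mulVec x ∈ V}
  add_mem' := by
    intro M N hM hN x
    rw [Set.mem_setOf_eq] at *
    rw [Matrix.add_mulVec]
    exact V.add_mem (hM x) (hN x)
  zero_mem' := by
    intro x
    simp only [Set.mem_setOf_eq, Matrix.zero_mulVec]
    exact V.zero_mem
  smul_mem' := by
    intro c M hM x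
    rw [Set.mem_setOf_eq] at *
    rw [Matrix.smul_mulVec]
    exact V.smul_mem c (hM x)

/-- The shortening `C(V, c) = {M ∈ C : colsp(M) ⊆ V}`. -/
def codeC {F : Type} [Field F] {n m : ℕ} (C : Submodule F (Matrix (Fin n) (Fin m) F))
    (V : Submodule F (Fin n → F)) : Submodule F (Matrix (Fin n) (Fin m) F) :=
  C ⊓ colspLE V

/-- The orthogonal of `V ≤ 𝔽^n` with respect to the standard dot product. -/
def dotPerp {F : Type} [Field F] {n : ℕ} (V : Submodule F (Fin n → F)) :
    Submodule F (Fin n → F) where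
  carrier := {w | ∀ v ∈ V, dotProduct v w = 0}
  add_mem' := by
    intro a b ha hb v hv
    rw [dotProduct_add, ha v hv, hb v hv, add_zero]
  zero_mem' := by
    intro v hv
    simp
  smul_mem' := by
    intro c a ha v hv
    rw [dotProduct_smul, ha v hv, smul_zero]

/-- The column rank function `ρ_c(V) = (dim C − dim C(V^⊥, c))/m` of a rank-metric code. -/
noncomputable def rhoC {F : Type} [Field F] {n m : ℕ}
    (C : Submodule F (Matrix (Fin n) (Fin m) F)) (V : Submodule F (Fin n → F)) : ℚ :=
  ((Module.finrank F C : ℚ) - (Module.finrank F (codeC C (dotPerp V)) : ℚ)) / m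

open Module

section Perp
variable {F : Type} [Field F] {n : ℕ}

noncomputable def dotB (F : Type) [Field F] (n : ℕ) : LinearMap.BilinForm F (Fin n → F) :=
  LinearMap.mk₂ F dotProduct
    (fun a b c => add_dotProduct a b c)
    (fun r a b => smul_dotProduct r a b)
    (fun a b c => dotProduct_add a b c)
    (fun r a b => dotProduct_smul r a b)

lemma dotB_nondeg (F : Type) [Field F] (n : ℕ) : (dotB F n).Nondegenerate := by
  constructor <;> intro v hv <;> ext i
  · simpa [dotB, dotProduct_single] using hv (Pi.single i 1)
  · simpa [dotB, single_dotProduct] using hv (Pi.single i 1)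

lemma dotB_refl (F : Type) [Field F] (n : ℕ) : (dotB F n).IsRefl := by
  intro v w h
  simp only [dotB, LinearMap.mk₂_apply] at h ⊢
  rwa [dotProduct_comm]

lemma dotPerp_eq_orthogonal (V : Submodule F (Fin n → F)) :
    dotPerp V = (dotB F n).orthogonal V := rfl

lemma finrank_dotPerp (V : Submodule F (Fin n → F)) :
    finrank F (dotPerp V) = n - finrank F V := by
  rw [dotPerp_eq_orthogonal]
  rw [LinearMap.BilinForm.finrank_orthogonal (dotB_nondeg F n)]
  simp

end Perp
section Basics
variable {F : Type} [Field F] {n m : ℕ}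

lemma mem_dotPerp {V : Submodule F (Fin n → F)} {w : Fin n → F} :
    w ∈ dotPerp V ↔ ∀ v ∈ V, dotProduct v w = 0 := Iff.rfl

lemma dotPerp_sup (X Y : Submodule F (Fin n → F)) :
    dotPerp (X ⊔ Y) = dotPerp X ⊓ dotPerp Y := by
  apply le_antisymm
  · intro w hw
    exact ⟨fun v hv => hw v (Submodule.mem_sup_left hv),
           fun v hv => hw v (Submodule.mem_sup_right hv)⟩
  · rintro w ⟨h1, h2⟩ v hv
    obtain ⟨x, hx, y, hy, rfl⟩ := Submodule.mem_sup.mp hv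
    rw [add_dotProduct, h1 x hx, h2 y hy, add_zero]

lemma mem_colspLE {W : Submodule F (Fin n → F)} {M : Matrix (Fin n) (Fin m) F} :
    M ∈ (colspLE W : Submodule F (Matrix (Fin n) (Fin m) F)) ↔ ∀ x, M.mulVec x ∈ W := Iff.rfl

lemma colspLE_bot : (colspLE ⊥ : Submodule F (Matrix (Fin n) (Fin m) F)) = ⊥ := by
  apply le_antisymm
  · intro M hM
    have : M = 0 := by
      ext i j
      have := hM (Pi.single j 1)
      rw [Submodule.mem_bot] at this
      have h2 := congrFun this i
      simp [Matrix.mulVec_single] at h2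
      exact h2
    simp [this]
  · intro M hM
    rw [Submodule.mem_bot] at hM
    subst hM
    intro x
    simp [Matrix.zero_mulVec]

lemma codeC_inf_eq_bot {C : Submodule F (Matrix (Fin n) (Fin m) F)}
    {X Y : Submodule F (Fin n → F)} (h : X ⊓ Y = ⊥) :
    codeC C X ⊓ codeC C Y = ⊥ := by
  rw [eq_bot_iff]
  rintro M ⟨⟨_, hX⟩, _, hY⟩
  have : M ∈ (colspLE (X ⊓ Y) : Submodule F (Matrix (Fin n) (Fin m) F)) :=
    fun x => ⟨hX x, hY x⟩
  rw [h, colspLE_bot] at this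
  exact this

lemma codeC_bot (C : Submodule F (Matrix (Fin n) (Fin m) F)) : codeC C ⊥ = ⊥ := by
  rw [codeC, colspLE_bot, inf_bot_eq]

lemma dotPerp_top : dotPerp (⊤ : Submodule F (Fin n → F)) = ⊥ := by
  rw [eq_bot_iff]
  intro w hw
  rw [Submodule.mem_bot]
  ext i
  have := hw (Pi.single i 1) trivial
  rwa [single_dotProduct, one_mul] at this

end Basics
namespace NonRep
abbrev F2 := ZMod 2
abbrev E := Fin 4 → F2

def gen : Fin 5 → E × E
  | 0 => (![1,0,0,0], ![0,1,0,0])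
  | 1 => (![0,0,1,0], ![0,0,0,1])
  | 2 => (![1,0,0,1], ![0,1,1,1])
  | 3 => (![1,0,1,1], ![0,1,1,0])
  | 4 => (![1,0,1,0], ![0,1,0,1])

def Vs (i : Fin 5) : Submodule F2 E := Submodule.span F2 {(gen i).1, (gen i).2}

lemma mem_Vs_iff {i : Fin 5} {v : E} :
    v ∈ Vs i ↔ ∃ c d : F2, c • (gen i).1 + d • (gen i).2 = v := by
  rw [Vs, Submodule.mem_span_pair]

lemma Vs_inf (i j : Fin 5) (hij : i ≠ j) : Vs i ⊓ Vs j = ⊥ := by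
  rw [eq_bot_iff]
  intro v hv
  obtain ⟨h1, h2⟩ := Submodule.mem_inf.mp hv
  rw [mem_Vs_iff] at h1 h2
  obtain ⟨c, d, rfl⟩ := h1
  obtain ⟨c', d', he⟩ := h2
  rw [Submodule.mem_bot]
  clear hv
  revert he
  fin_cases i <;> fin_cases j <;> first
    | exact absurd rfl hij
    | (revert c d c' d'; decide)
end NonRep
namespace NonRep

lemma finrank_Vs (i : Fin 5) : Module.finrank F2 (Vs i) = 2 := by
  have hr : ({(gen i).1, (gen i).2} : Set E) = Set.range ![(gen i).1, (gen i).2] := by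
    simp [Matrix.range_cons, Matrix.range_empty, Set.insert_comm]
    aesop
  have hli : LinearIndependent F2 ![(gen i).1, (gen i).2] := by
    rw [linearIndependent_fin2]
    constructor
    · fin_cases i <;> simp [gen]
    · intro a
      fin_cases i <;> revert a <;> decide
  rw [Vs, hr, finrank_span_eq_card hli]
  simp

end NonRep
namespace NonRep
open Module Finset

lemma spread_cover (W : Fin 5 → Submodule F2 E)
    (hrk : ∀ i, finrank F2 (W i) = 2)
    (hint : ∀ i j, i ≠ j → W i ⊓ W j = ⊥)
    (v : E) (hv : ∀ i, i ≠ (4 : Fin 5) → v ∉ W i) : v ∈ W 4 := by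
  classical
  by_cases hv0 : v = 0
  · simp [hv0]
  by_contra hv4
  have hvall : ∀ i, v ∉ W i := by
    intro i
    by_cases hi : i = 4
    · subst hi; exact hv4
    · exact hv i hi
  -- finsets
  set s : Fin 5 → Finset E := fun i => Finset.univ.filter (· ∈ W i) with hs
  have hcard : ∀ i, (s i).card = 4 := by
    intro i
    have h1 : Fintype.card (W i) = 2 ^ finrank F2 (W i) := by
      have := card_eq_pow_finrank (K := F2) (V := W i)
      simpa using this
    rw [hrk i] at h1
    have h2 : Fintype.card (W i) = (s i).card := by
      rw [hs]
      simp [Fintype.card_subtype]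
    omega
  set t : Fin 5 → Finset E := fun i => (s i).erase 0 with ht
  have htcard : ∀ i, (t i).card = 3 := by
    intro i
    have h0 : (0 : E) ∈ s i := by simp [hs]
    rw [ht]
    simp only []
    rw [Finset.card_erase_of_mem h0, hcard i]
  have hdisj : ∀ i ∈ (Finset.univ : Finset (Fin 5)), ∀ j ∈ (Finset.univ : Finset (Fin 5)),
      i ≠ j → Disjoint (t i) (t j) := by
    intro i _ j _ hij
    rw [Finset.disjoint_left]
    intro x hxi hxj
    have hxi' : x ∈ W i := by
      have := Finset.mem_of_mem_erase hxi; simp [hs] at this; exact this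
    have hxj' : x ∈ W j := by
      have := Finset.mem_of_mem_erase hxj; simp [hs] at this; exact this
    have : x ∈ W i ⊓ W j := ⟨hxi', hxj'⟩
    rw [hint i j hij] at this
    rw [Submodule.mem_bot] at this
    subst this
    exact (Finset.notMem_erase _ _) hxi
  set B : Finset E := Finset.univ.biUnion t with hB
  have hBcard : B.card = 15 := by
    rw [hB, Finset.card_biUnion hdisj]
    simp [htcard]
  have hvB : v ∉ B := by
    rw [hB]
    simp only [Finset.mem_biUnion]
    rintro ⟨i, -, hvi⟩
    exact hvall i (by have := Finset.mem_of_mem_erase hvi; simpa [hs] using this)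
  have h0B : (0 : E) ∉ B := by
    rw [hB]
    simp only [Finset.mem_biUnion]
    rintro ⟨i, -, h0i⟩
    exact (Finset.notMem_erase _ _) h0i
  have hfinal : (insert v (insert (0 : E) B)).card = 17 := by
    rw [Finset.card_insert_of_notMem (by simp [hv0, hvB]),
        Finset.card_insert_of_notMem h0B, hBcard]
  have hle : (insert v (insert (0 : E) B)).card ≤ Fintype.card E := Finset.card_le_univ _
  have : Fintype.card E = 16 := by simp [Fintype.card_fun]
  omega

end NonRep
namespace NonRep
open Module

lemma neg_eq_self' (x : E) : -x = x := by
  ext i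
  simp [CharTwo.neg_eq]

lemma sub_eq_add' (x y : E) : x - y = x + y := by
  rw [sub_eq_add_neg, neg_eq_self']

lemma add_self' (x : E) : x + x = 0 := by
  rw [← sub_eq_add', sub_self]

lemma spread_rel (W : Fin 5 → Submodule F2 E)
    (hrk : ∀ i, finrank F2 (W i) = 2)
    (hint : ∀ i j, i ≠ j → W i ⊓ W j = ⊥)
    {a r₁ r₂ r₃ q₁ q₂ q₃ : E}
    (ha : a ∈ W 0) (hr₁ : r₁ ∈ W 1) (hr₂ : r₂ ∈ W 0) (hr₃ : r₃ ∈ W 1)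
    (hq₁ : q₁ ∈ W 3) (hq₂ : q₂ ∈ W 2) (hq₃ : q₃ ∈ W 3)
    (e₁ : q₁ + r₁ = a) (e₂ : q₂ + r₂ = r₁) (e₃ : q₃ + r₃ = r₂) :
    a + r₃ ∈ W 4 := by
  have key : ∀ (i j : Fin 5), i ≠ j → ∀ x : E, x ∈ W i → x ∈ W j → x = 0 := by
    intro i j hij x hxi hxj
    have : x ∈ W i ⊓ W j := ⟨hxi, hxj⟩
    rwa [hint i j hij, Submodule.mem_bot] at this
  have hq₁' : q₁ = a + r₁ := by
    rw [← sub_eq_add', eq_sub_iff_add_eq]; exact e₁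
  have hq₂' : q₂ = r₁ + r₂ := by
    have h : q₂ = (q₂ + r₂) + r₂ := by rw [add_assoc, add_self', add_zero]
    rwa [e₂] at h
  have hq₃' : q₃ = r₂ + r₃ := by
    have h : q₃ = (q₃ + r₃) + r₃ := by rw [add_assoc, add_self', add_zero]
    rwa [e₃] at h
  by_cases hx0 : a + r₃ = 0
  · rw [hx0]; exact (W 4).zero_mem
  apply spread_cover W hrk hint
  intro i hi4 hx
  -- from (a + r₃) ∈ W i with i ≠ 4 we derive a + r₃ = 0, contradiction
  apply hx0
  have hcase0 : a + r₃ ∈ W 0 → a + r₃ = 0 := by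
    intro hx
    have hr₃0 : r₃ ∈ W 0 := by
      have := (W 0).add_mem hx ha
      rwa [add_comm a r₃, add_assoc, add_self', add_zero] at this
    have hr₃z : r₃ = 0 := key 1 0 (by decide) r₃ hr₃ hr₃0
    have hq₃r : q₃ = r₂ := by rw [hq₃', hr₃z, add_zero]
    have hr₂z : r₂ = 0 := key 0 3 (by decide) r₂ hr₂ (hq₃r ▸ hq₃)
    have hq₂r : q₂ = r₁ := by rw [hq₂', hr₂z, add_zero]
    have hr₁z : r₁ = 0 := key 1 2 (by decide) r₁ hr₁ (hq₂r ▸ hq₂)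
    have hq₁r : q₁ = a := by rw [hq₁', hr₁z, add_zero]
    have haz : a = 0 := key 0 3 (by decide) a ha (hq₁r ▸ hq₁)
    rw [haz, hr₃z, add_zero]
  have hcase1 : a + r₃ ∈ W 1 → a + r₃ = 0 := by
    intro hx
    have ha1 : a ∈ W 1 := by
      have := (W 1).add_mem hx hr₃
      rwa [add_assoc, add_self', add_zero] at this
    have haz : a = 0 := key 0 1 (by decide) a ha ha1
    have hq₁r : q₁ = r₁ := by rw [hq₁', haz, zero_add]
    have hr₁z : r₁ = 0 := key 1 3 (by decide) r₁ hr₁ (hq₁r ▸ hq₁)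
    have hq₂r : q₂ = r₂ := by rw [hq₂', hr₁z, zero_add]
    have hr₂z : r₂ = 0 := key 0 2 (by decide) r₂ hr₂ (hq₂r ▸ hq₂)
    have hq₃r : q₃ = r₃ := by rw [hq₃', hr₂z, zero_add]
    have hr₃z : r₃ = 0 := key 1 3 (by decide) r₃ hr₃ (hq₃r ▸ hq₃)
    rw [haz, hr₃z, add_zero]
  have hcase3 : a + r₃ ∈ W 3 → a + r₃ = 0 := by
    intro hx
    -- (a + r₃) + q₁ + q₃ = r₁ + r₂ ∈ W 3, and q₂ = r₁ + r₂ ∈ W 2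
    have hsum : a + r₃ + q₁ + q₃ = r₁ + r₂ := by
      rw [hq₁', hq₃']
      have : a + r₃ + (a + r₁) + (r₂ + r₃) =
          (a + a) + (r₃ + r₃) + (r₁ + r₂) := by abel
      rw [this, add_self', add_self', zero_add, zero_add]
    have hmem3 : r₁ + r₂ ∈ W 3 := by
      rw [← hsum]
      exact (W 3).add_mem ((W 3).add_mem hx hq₁) hq₃
    have hq₂z : q₂ = 0 := key 2 3 (by decide) q₂ hq₂ (hq₂' ▸ hmem3)
    have hr₁r₂ : r₁ = r₂ := by
      have := hq₂'.symm.trans hq₂z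
      -- r₁ + r₂ = 0
      have h0 : r₁ + r₂ = 0 := this
      have := eq_neg_of_add_eq_zero_left h0
      rwa [neg_eq_self'] at this
    have hr₁z : r₁ = 0 := key 1 0 (by decide) r₁ hr₁ (hr₁r₂ ▸ hr₂)
    have hr₂z : r₂ = 0 := by rw [← hr₁r₂, hr₁z]
    have hq₁r : q₁ = a := by rw [hq₁', hr₁z, add_zero]
    have haz : a = 0 := key 0 3 (by decide) a ha (hq₁r ▸ hq₁)
    have hq₃r : q₃ = r₃ := by rw [hq₃', hr₂z, zero_add]
    have hr₃z : r₃ = 0 := key 1 3 (by decide) r₃ hr₃ (hq₃r ▸ hq₃)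
    rw [haz, hr₃z, add_zero]
  have hcase2 : a + r₃ ∈ W 2 → a + r₃ = 0 := by
    intro hx
    -- z := a + r₁ + r₂ + r₃ lies in W 2 (as x + q₂) and in W 3 (as q₁ + q₃)
    have hz2 : a + r₃ + q₂ ∈ W 2 := (W 2).add_mem hx hq₂
    have hz3 : q₁ + q₃ ∈ W 3 := (W 3).add_mem hq₁ hq₃
    have hzeq : a + r₃ + q₂ = q₁ + q₃ := by
      rw [hq₁', hq₂', hq₃']; abel
    have hzz : a + r₃ + q₂ = 0 :=
      key 2 3 (by decide) _ hz2 (hzeq ▸ hz3)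
    -- a + r₃ + r₁ + r₂ = 0, i.e. (a + r₂) = (r₁ + r₃)
    have har₂ : a + r₂ = r₁ + r₃ := by
      rw [hq₂'] at hzz
      have h1 : (a + r₂) + (r₁ + r₃) = 0 := by rw [← hzz]; abel
      have := eq_neg_of_add_eq_zero_left h1
      rwa [neg_eq_self'] at this
    have hmm : a + r₂ = 0 :=
      key 0 1 (by decide) _ ((W 0).add_mem ha hr₂) (har₂ ▸ (W 1).add_mem hr₁ hr₃)
    have hmm' : r₁ + r₃ = 0 := by rw [← har₂, hmm]
    have har : a = r₂ := by
      have := eq_neg_of_add_eq_zero_left hmm; rwa [neg_eq_self'] at this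
    have hrr : r₁ = r₃ := by
      have := eq_neg_of_add_eq_zero_left hmm'; rwa [neg_eq_self'] at this
    -- then a + r₃ = a + r₁ = q₁ ∈ W 3, but also ∈ W 2 (hx)
    have hxq₁ : a + r₃ = q₁ := by rw [hq₁', hrr]
    have : a + r₃ = 0 := key 2 3 (by decide) _ hx (hxq₁ ▸ hq₁)
    exact this
  fin_cases i
  · exact hcase0 hx
  · exact hcase1 hx
  · exact hcase2 hx
  · exact hcase3 hx
  · exact absurd rfl hi4
end NonRep
namespace NonRep
open Module

lemma Vs_ne_bot (i : Fin 5) : Vs i ≠ ⊥ := by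
  intro h
  have := finrank_Vs i
  rw [h, finrank_bot] at this
  exact absurd this (by decide)

lemma Vs_ne (i j : Fin 5) (hij : i ≠ j) : Vs i ≠ Vs j := by
  intro h
  have := Vs_inf i j hij
  rw [h, inf_idem] at this
  exact Vs_ne_bot j this

lemma finrank_E : finrank F2 E = 4 := by
  simp

lemma top_ne_Vs (i : Fin 5) : (⊤ : Submodule F2 E) ≠ Vs i := by
  intro h
  have h1 : finrank F2 (⊤ : Submodule F2 E) = 4 := by
    rw [finrank_top, finrank_E]
  rw [h, finrank_Vs] at h1
  exact absurd h1 (by decide)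

end NonRep

open NonRep

/-- The `q`-matroid on `𝔽_2^4` determined by the partial spread
`𝒮 = {V₀, V₁, V₂, V₃}` (with `ρ(V) = 1` on `𝒮` and `ρ(V) = min{2, dim V}` otherwise) is
not representable by any rank-metric code `C ≤ 𝔽_2^{4×m}`: for every `m` there is no
code `C` and automorphism `α` of `𝔽_2^4` with `ρ_c(α(V)) = ρ(V)` for all `V`. -/
theorem nonrepresentable_qMatroid
    (𝒮 : Set (Submodule (ZMod 2) (Fin 4 → ZMod 2)))
    (h𝒮 : 𝒮 = {Submodule.span (ZMod 2) {![1,0,0,0], ![0,1,0,0]},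
               Submodule.span (ZMod 2) {![0,0,1,0], ![0,0,0,1]},
               Submodule.span (ZMod 2) {![1,0,0,1], ![0,1,1,1]},
               Submodule.span (ZMod 2) {![1,0,1,1], ![0,1,1,0]}})
    (ρ : Submodule (ZMod 2) (Fin 4 → ZMod 2) → ℕ)
    (hρ𝒮 : ∀ V ∈ 𝒮, ρ V = 1)
    (hρ : ∀ (V : Submodule (ZMod 2) (Fin 4 → ZMod 2)), V ∉ 𝒮 →
      ρ V = min 2 (finrank (ZMod 2) V)) :
    ∀ m : ℕ, ¬ ∃ (C : Submodule (ZMod 2) (Matrix (Fin 4) (Fin m) (ZMod 2)))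
      (α : (Fin 4 → ZMod 2) ≃ₗ[ZMod 2] (Fin 4 → ZMod 2)),
      ∀ V : Submodule (ZMod 2) (Fin 4 → ZMod 2),
        rhoC C (Submodule.map (α : (Fin 4 → ZMod 2) →ₗ[ZMod 2] (Fin 4 → ZMod 2)) V)
          = (ρ V : ℚ) := by
  rintro m ⟨C, α, hC⟩
  have hSeq : 𝒮 = {Vs 0, Vs 1, Vs 2, Vs 3} := h𝒮
  -- ρ values
  have hmem : ∀ i : Fin 5, i ≠ 4 → Vs i ∈ 𝒮 := by
    intro i hi
    rw [hSeq]
    fin_cases i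
    · left; rfl
    · right; left; rfl
    · right; right; left; rfl
    · right; right; right; rfl
    · exact absurd rfl hi
  have hρ1 : ∀ i : Fin 5, i ≠ 4 → ρ (Vs i) = 1 := fun i hi => hρ𝒮 _ (hmem i hi)
  have hV4not : Vs 4 ∉ 𝒮 := by
    rw [hSeq]
    intro h
    rcases h with h | h | h | h
    · exact Vs_ne 4 0 (by decide) h
    · exact Vs_ne 4 1 (by decide) h
    · exact Vs_ne 4 2 (by decide) h
    · exact Vs_ne 4 3 (by decide) h
  have hρ4 : ρ (Vs 4) = 2 := by
    rw [hρ _ hV4not, finrank_Vs]; rfl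
  have htopnot : (⊤ : Submodule F2 E) ∉ 𝒮 := by
    rw [hSeq]
    intro h
    rcases h with h | h | h | h
    · exact top_ne_Vs 0 h
    · exact top_ne_Vs 1 h
    · exact top_ne_Vs 2 h
    · exact top_ne_Vs 3 h
  have hρtop : ρ ⊤ = 2 := by
    rw [hρ _ htopnot, finrank_top, finrank_E]; rfl
  -- the five planes on the W side
  set αl := (α : E →ₗ[F2] E) with hαl
  set W : Fin 5 → Submodule F2 E := fun i => dotPerp (Submodule.map αl (Vs i)) with hW
  have hmaprank : ∀ i, finrank F2 (Submodule.map αl (Vs i)) = 2 := by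
    intro i
    rw [hαl, LinearEquiv.finrank_map_eq, finrank_Vs]
  have hWrk : ∀ i, finrank F2 (W i) = 2 := by
    intro i
    rw [hW]
    simp only []
    rw [finrank_dotPerp, hmaprank]
  have hWint : ∀ i j, i ≠ j → W i ⊓ W j = ⊥ := by
    intro i j hij
    have hsum : finrank F2 (Vs i ⊔ Vs j : Submodule F2 E) = 4 := by
      have h1 := Submodule.finrank_sup_add_finrank_inf_eq (Vs i) (Vs j)
      rw [Vs_inf i j hij, finrank_bot, finrank_Vs, finrank_Vs] at h1
      omega
    have heq : W i ⊓ W j = dotPerp (Submodule.map αl (Vs i ⊔ Vs j)) := by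
      rw [hW]
      simp only []
      rw [Submodule.map_sup, dotPerp_sup]
    have hrk0 : finrank F2 (W i ⊓ W j : Submodule F2 E) = 0 := by
      rw [heq, finrank_dotPerp, hαl, LinearEquiv.finrank_map_eq, hsum]
    exact Submodule.finrank_eq_zero.mp hrk0
  -- dimensions from the rank hypothesis
  have hmapt : Submodule.map αl (⊤ : Submodule F2 E) = ⊤ := by
    rw [Submodule.map_top, LinearMap.range_eq_top]
    exact α.surjective
  have htopC := hC ⊤
  rw [hmapt, hρtop, rhoC, dotPerp_top, codeC_bot, finrank_bot] at htopC
  have hm : m ≠ 0 := by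
    rintro rfl
    norm_num at htopC
  have hmQ : (m : ℚ) ≠ 0 := Nat.cast_ne_zero.mpr hm
  rw [Nat.cast_zero, sub_zero, div_eq_iff hmQ] at htopC
  have hdm : finrank F2 C = 2 * m := by exact_mod_cast htopC
  set A : Fin 5 → Submodule F2 (Matrix (Fin 4) (Fin m) F2) := fun i => codeC C (W i) with hA
  have hAeq : ∀ i : Fin 5,
      codeC C (dotPerp (Submodule.map αl (Vs i))) = A i := fun _ => rfl
  have hAval : ∀ i : Fin 5, i ≠ 4 → finrank F2 (A i) = m := by
    intro i hi
    have h := hC (Vs i)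
    rw [hρ1 i hi, rhoC, hAeq i, Nat.cast_one, div_eq_iff hmQ, one_mul, hdm] at h
    have : (finrank F2 (A i) : ℚ) = m := by push_cast at h ⊢; linarith
    exact_mod_cast this
  have hA4 : A 4 = ⊥ := by
    have h := hC (Vs 4)
    rw [hρ4, rhoC, hAeq 4, div_eq_iff hmQ, hdm] at h
    have : (finrank F2 (A 4) : ℚ) = 0 := by push_cast at h ⊢; linarith
    have h0 : finrank F2 (A 4) = 0 := by exact_mod_cast this
    exact Submodule.finrank_eq_zero.mp h0
  -- lattice structure of the shortenings
  have hAle : ∀ i, A i ≤ C := fun i => inf_le_left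
  have hAint : ∀ i j, i ≠ j → A i ⊓ A j = ⊥ := by
    intro i j hij
    exact codeC_inf_eq_bot (hWint i j hij)
  have hsup : ∀ i j, i ≠ 4 → j ≠ 4 → i ≠ j → A i ⊔ A j = C := by
    intro i j hi hj hij
    have h1 := Submodule.finrank_sup_add_finrank_inf_eq (A i) (A j)
    rw [hAint i j hij, finrank_bot, hAval i hi, hAval j hj, add_zero] at h1
    apply Submodule.eq_of_le_of_finrank_eq (sup_le (hAle i) (hAle j))
    rw [h1, hdm]
    omega
  -- build a nonzero element of A 4
  have hA0ne : A 0 ≠ ⊥ := by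
    intro h
    have := hAval 0 (by decide)
    rw [h, finrank_bot] at this
    omega
  obtain ⟨P₀, hP₀, hP₀ne⟩ := Submodule.exists_mem_ne_zero_of_ne_bot hA0ne
  have hP₀C : P₀ ∈ C := hAle 0 hP₀
  rw [← hsup 3 1 (by decide) (by decide) (by decide)] at hP₀C
  obtain ⟨Q₁, hQ₁, R₁, hR₁, e₁⟩ := Submodule.mem_sup.mp hP₀C
  have hR₁C : R₁ ∈ C := hAle 1 hR₁
  rw [← hsup 2 0 (by decide) (by decide) (by decide)] at hR₁C
  obtain ⟨Q₂, hQ₂, R₂, hR₂, e₂⟩ := Submodule.mem_sup.mp hR₁C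
  have hR₂C : R₂ ∈ C := hAle 0 hR₂
  rw [← hsup 3 1 (by decide) (by decide) (by decide)] at hR₂C
  obtain ⟨Q₃, hQ₃, R₃, hR₃, e₃⟩ := Submodule.mem_sup.mp hR₂C
  -- N = P₀ + R₃ belongs to A 4
  have hNC : P₀ + R₃ ∈ C := C.add_mem (hAle 0 hP₀) (hAle 1 hR₃)
  have hNA4 : P₀ + R₃ ∈ A 4 := by
    refine ⟨hNC, ?_⟩
    intro x
    rw [Matrix.add_mulVec]
    refine spread_rel W hWrk hWint (hP₀.2 x) (hR₁.2 x) (hR₂.2 x) (hR₃.2 x)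
      (hQ₁.2 x) (hQ₂.2 x) (hQ₃.2 x) ?_ ?_ ?_
    · rw [← Matrix.add_mulVec, e₁]
    · rw [← Matrix.add_mulVec, e₂]
    · rw [← Matrix.add_mulVec, e₃]
  rw [hA4, Submodule.mem_bot] at hNA4
  -- contradiction: P₀ = R₃ lies in A 0 ⊓ A 1 = ⊥
  have hP₀R₃ : P₀ = R₃ := by
    have := eq_neg_of_add_eq_zero_left hNA4
    rw [this]
    ext i j
    simp [CharTwo.neg_eq]
  apply hP₀ne
  have : P₀ ∈ A 0 ⊓ A 1 := ⟨hP₀, hP₀R₃ ▸ hR₃⟩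
  rwa [hAint 0 1 (by decide), Submodule.mem_bot] at this
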